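/- Let n be a composite number and let Z_n be the cyclic group of order n. The characteristic polynomial of the distance matrix of the strong power graph P_s(Z_n) equals (x+1)^{n-3} · ( x^3 + (3-n)x^2 + (3 - 2n - 3φ(n))x - φ(n)^2 - φ(n)(4-n) - n + 1 ), where φ is Euler's totient function. -/

import Mathlib

/-- The strong power graph of the cyclic group `ZMod n` (written additively):
two distinct vertices `x` and `y` are adjacent iff `a • x = b • y` for some
positive integers `a, b < n`. -/
def strongPowerGraphZ (n : ℕ) : SimpleGraph (ZMod n) where
  Adj x y := x ≠ y ∧ ∃ a b : ℕ, 0 < a ∧ a < n ∧ 0 < b ∧ b < n ∧ a • x = b • y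
  symm := by
    constructor
    rintro x y ⟨h, a, b, ha, ha', hb, hb', hab⟩
    exact ⟨h.symm, b, a, hb, hb', ha, ha', hab.symm⟩
  loopless := by
    constructor
    rintro x ⟨h, -⟩
    exact h rfl

/-- The distance matrix (with real entries) of the strong power graph of `ZMod n`. -/
noncomputable def distMatrixZ (n : ℕ) [NeZero n] : Matrix (ZMod n) (ZMod n) ℝ :=
  Matrix.of fun i j => ((strongPowerGraphZ n).dist i j : ℝ)

open Classical in
/-- The adjacency matrix (with real entries) of the strong power graph of `ZMod n`. -/
noncomputable def adjMatrixZ (n : ℕ) [NeZero n] : Matrix (ZMod n) (ZMod n) ℝ :=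
  Matrix.of fun i j => if (strongPowerGraphZ n).Adj i j then 1 else 0

open scoped Classical

-- helper 1: nonunit annihilator
lemma annih {n : ℕ} [NeZero n] (hn : 2 ≤ n) {x : ZMod n} (hx : ¬ IsUnit x) :
    ∃ a : ℕ, 0 < a ∧ a < n ∧ (a : ZMod n) * x = 0 := by
  by_cases h0 : x = 0
  · exact ⟨1, one_pos, by omega, by simp [h0]⟩
  · set d := Nat.gcd x.val n with hd
    have hdvdn : d ∣ n := Nat.gcd_dvd_right _ _
    have hdvdx : d ∣ x.val := Nat.gcd_dvd_left _ _
    have hd1 : d ≠ 1 := by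
      intro h1
      apply hx
      have : IsUnit ((x.val : ℕ) : ZMod n) := (ZMod.isUnit_iff_coprime x.val n).2 h1
      simpa [ZMod.natCast_val, ZMod.cast_id] using this
    have hdpos : 0 < d := Nat.gcd_pos_of_pos_right _ (Nat.pos_of_ne_zero (NeZero.ne n))
    refine ⟨n / d, Nat.div_pos (Nat.le_of_dvd (by omega) hdvdn) hdpos,
      Nat.div_lt_self (by omega) (by omega), ?_⟩
    obtain ⟨k, hk⟩ := hdvdx
    have : ((n / d) * x.val : ℕ) = n * k := by
      rw [hk, ← mul_assoc, Nat.div_mul_cancel hdvdn]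
    calc ((n / d : ℕ) : ZMod n) * x = (((n / d) * x.val : ℕ) : ZMod n) := by
          push_cast [ZMod.natCast_val, ZMod.cast_id]; ring
      _ = ((n * k : ℕ) : ZMod n) := by rw [this]
      _ = 0 := by push_cast; simp [ZMod.natCast_self]

-- helper 2: unit reaches any nonzero
lemma unit_reach {n : ℕ} [NeZero n] {x y : ZMod n} (hx : IsUnit x) (hy : y ≠ 0) :
    ∃ a : ℕ, 0 < a ∧ a < n ∧ (a : ZMod n) * x = y := by
  have h1 : ((hx.unit⁻¹ : (ZMod n)ˣ) : ZMod n) * x = 1 := by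
    simpa [hx.unit_spec] using hx.unit.inv_mul
  set z : ZMod n := ((hx.unit⁻¹ : (ZMod n)ˣ) : ZMod n) * y with hz
  have hzx : z * x = y := by
    rw [hz, mul_comm _ y, mul_assoc, h1, mul_one]
  have hz0 : z ≠ 0 := by
    intro h
    apply hy
    rw [← hzx, h, zero_mul]
  refine ⟨z.val, ?_, ZMod.val_lt z, ?_⟩
  · have := (ZMod.val_eq_zero z).not.2 hz0
    omega
  · rw [ZMod.natCast_val, ZMod.cast_id, hzx]

lemma adj_iff {n : ℕ} [NeZero n] (hn : 2 ≤ n) (x y : ZMod n) :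
    (strongPowerGraphZ n).Adj x y ↔
      x ≠ y ∧ ¬(x = 0 ∧ IsUnit y) ∧ ¬(y = 0 ∧ IsUnit x) := by
  constructor
  · rintro ⟨hxy, a, b, ha, ha', hb, hb', hab⟩
    simp only [smul_eq_mul, nsmul_eq_mul] at hab
    refine ⟨hxy, ?_, ?_⟩
    · rintro ⟨hx0, hy⟩
      rw [hx0, mul_zero] at hab
      have : (b : ZMod n) = 0 := (hy.mul_left_eq_zero).1 hab.symm
      rw [ZMod.natCast_eq_zero_iff] at this
      have := Nat.le_of_dvd hb this
      omega
    · rintro ⟨hy0, hx⟩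
      rw [hy0, mul_zero] at hab
      have : (a : ZMod n) = 0 := (hx.mul_left_eq_zero).1 hab
      rw [ZMod.natCast_eq_zero_iff] at this
      have := Nat.le_of_dvd ha this
      omega
  · rintro ⟨hxy, h1, h2⟩
    refine ⟨hxy, ?_⟩
    by_cases hx : IsUnit x
    · have hy0 : y ≠ 0 := fun h => h2 ⟨h, hx⟩
      obtain ⟨a, ha, ha', hax⟩ := unit_reach hx hy0
      exact ⟨a, 1, ha, ha', one_pos, by omega, by simpa [nsmul_eq_mul] using hax⟩
    · by_cases hy : IsUnit y
      · have hx0 : x ≠ 0 := fun h => h1 ⟨h, hy⟩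
        obtain ⟨b, hb, hb', hby⟩ := unit_reach hy hx0
        exact ⟨1, b, one_pos, by omega, hb, hb', by simpa [nsmul_eq_mul] using hby.symm⟩
      · obtain ⟨a, ha, ha', hax⟩ := annih hn hx
        obtain ⟨b, hb, hb', hby⟩ := annih hn hy
        exact ⟨a, b, ha, ha', hb, hb', by simp [nsmul_eq_mul, hax, hby]⟩

lemma dist_eq {n : ℕ} [NeZero n] (hn : 2 ≤ n) (hnp : ¬ n.Prime) (x y : ZMod n) :
    (strongPowerGraphZ n).dist x y =
      if x = y then 0 else
        if (x = 0 ∧ IsUnit y) ∨ (y = 0 ∧ IsUnit x) then 2 else 1 := by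
  haveI : Nontrivial (ZMod n) := ZMod.nontrivial_iff.2 (by omega)
  by_cases hxy : x = y
  · simp [hxy, SimpleGraph.dist_self]
  · rw [if_neg hxy]
    by_cases hP : (x = 0 ∧ IsUnit y) ∨ (y = 0 ∧ IsUnit x)
    · rw [if_pos hP]
      -- find a middle vertex: nonzero nonunit
      obtain ⟨d, hdn, hd2, hdlt⟩ := Nat.exists_dvd_of_not_prime2 hn hnp
      set w : ZMod n := (d : ZMod n) with hw
      have hw0 : w ≠ 0 := by
        rw [hw, Ne, ZMod.natCast_eq_zero_iff]
        intro h
        have := Nat.le_of_dvd (by omega) h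
        omega
      have hwu : ¬ IsUnit w := by
        rw [hw, ZMod.isUnit_iff_coprime]
        unfold Nat.Coprime
        rw [Nat.gcd_eq_left hdn]
        omega
      have hNadj : ¬ (strongPowerGraphZ n).Adj x y := by
        rw [adj_iff hn]
        rintro ⟨-, hA, hB⟩
        rcases hP with h | h
        · exact hA h
        · exact hB h
      -- In either case of hP, x and y are each adjacent to w.
      have hx0y : (x = 0 ∧ IsUnit y) ∨ (y = 0 ∧ IsUnit x) := hP
      have hxw : (strongPowerGraphZ n).Adj x w := by
        rw [adj_iff hn]
        rcases hP with ⟨h0, hu⟩ | ⟨h0, hu⟩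
        · exact ⟨by rw [h0]; exact hw0.symm, fun h => hwu h.2, fun h => hw0 h.1⟩
        · refine ⟨fun h => hwu (h ▸ hu), fun h => hwu h.2, fun h => hw0 h.1⟩
      have hyw : (strongPowerGraphZ n).Adj w y := by
        rw [adj_iff hn]
        rcases hP with ⟨h0, hu⟩ | ⟨h0, hu⟩
        · exact ⟨fun h => hwu (h ▸ hu), fun h => hw0 h.1, fun h => hwu h.2⟩
        · exact ⟨by rw [h0]; exact hw0, fun h => hw0 h.1, fun h => hwu h.2⟩
      have hle : (strongPowerGraphZ n).dist x y ≤ 2 := by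
        have h := SimpleGraph.dist_le (SimpleGraph.Walk.cons hxw hyw.toWalk)
        simpa using h
      have hpos : 0 < (strongPowerGraphZ n).dist x y :=
        SimpleGraph.Reachable.pos_dist_of_ne ⟨SimpleGraph.Walk.cons hxw hyw.toWalk⟩ hxy
      have hne1 : (strongPowerGraphZ n).dist x y ≠ 1 := by
        rw [Ne, SimpleGraph.dist_eq_one_iff_adj]
        exact hNadj
      omega
    · rw [if_neg hP]
      rw [SimpleGraph.dist_eq_one_iff_adj, adj_iff hn]
      push_neg at hP
      exact ⟨hxy, fun h => hP.1 h.1 h.2, fun h => hP.2 h.1 h.2⟩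

noncomputable def uu (n : ℕ) : ZMod n → ℝ := fun i => if i = 0 then 1 else 0
noncomputable def ff (n : ℕ) : ZMod n → ℝ := fun i => if IsUnit i then 1 else 0

noncomputable def UU (n : ℕ) : Matrix (ZMod n) (Fin 3) ℝ :=
  Matrix.of fun i k => ![1, uu n i, ff n i] k
noncomputable def VV (n : ℕ) : Matrix (Fin 3) (ZMod n) ℝ :=
  Matrix.of fun k j => ![1, ff n j, uu n j] k

lemma ff_zero (n : ℕ) [NeZero n] (hn : 2 ≤ n) : ff n 0 = 0 := by
  haveI : Nontrivial (ZMod n) := ZMod.nontrivial_iff.2 (by omega)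
  simp [ff, isUnit_zero_iff]

lemma sum_ff (n : ℕ) [NeZero n] : ∑ j : ZMod n, ff n j = n.totient := by
  rw [show (∑ j : ZMod n, ff n j) = ((Finset.univ.filter (fun j : ZMod n => IsUnit j)).card : ℝ) by
    unfold ff
    rw [Finset.card_filter, Nat.cast_sum]
    exact Finset.sum_congr rfl fun j _ => by by_cases h : IsUnit j <;> simp [h]]
  congr 1
  rw [← Fintype.card_subtype]
  rw [← ZMod.card_units_eq_totient n]
  exact Fintype.card_congr
    ⟨fun x => x.2.unit, fun u => ⟨u, u.isUnit⟩, fun x => Subtype.ext x.2.unit_spec,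
     fun u => Units.ext u.isUnit.unit_spec⟩

lemma sum_uu (n : ℕ) [NeZero n] : ∑ j : ZMod n, uu n j = 1 := by
  simp [uu]

lemma sum_uu_ff (n : ℕ) [NeZero n] (hn : 2 ≤ n) : ∑ j : ZMod n, uu n j * ff n j = 0 := by
  apply Finset.sum_eq_zero
  intro j _
  by_cases h : j = 0
  · simp [h, uu, ff_zero n hn]
  · simp [uu, h]

lemma sum_ff_ff (n : ℕ) [NeZero n] : ∑ j : ZMod n, ff n j * ff n j = n.totient := by
  rw [← sum_ff n]
  apply Finset.sum_congr rfl
  intro j _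
  by_cases h : IsUnit j <;> simp [ff, h]

lemma sum_uu_uu (n : ℕ) [NeZero n] : ∑ j : ZMod n, uu n j * uu n j = 1 := by
  rw [← sum_uu n]
  apply Finset.sum_congr rfl
  intro j _
  by_cases h : j = 0 <;> simp [uu, h]

lemma sum_ff_uu (n : ℕ) [NeZero n] (hn : 2 ≤ n) : ∑ j : ZMod n, ff n j * uu n j = 0 := by
  rw [← sum_uu_ff n hn]
  exact Finset.sum_congr rfl fun j _ => mul_comm _ _

lemma VU (n : ℕ) [NeZero n] (hn : 2 ≤ n) :
    VV n * UU n = !![(n : ℝ), 1, (n.totient : ℝ);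
                     (n.totient : ℝ), 0, (n.totient : ℝ);
                     1, 1, 0] := by
  have h0 : ∑ j : ZMod n, (1 : ℝ) = n := by
    simp [Finset.card_univ, ZMod.card]
  ext k l
  fin_cases k <;> fin_cases l <;>
    simp [Matrix.mul_apply, UU, VV, h0, sum_uu n, sum_ff n, sum_ff_ff n, sum_uu_uu n,
      sum_uu_ff n hn, sum_ff_uu n hn]

lemma uu_def (n : ℕ) (i : ZMod n) : uu n i = if i = 0 then 1 else 0 := rfl
lemma ff_def (n : ℕ) (i : ZMod n) : ff n i = if IsUnit i then 1 else 0 := rfl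
lemma UU_def (n : ℕ) (i : ZMod n) (k : Fin 3) : UU n i k = ![1, uu n i, ff n i] k := rfl
lemma VV_def (n : ℕ) (k : Fin 3) (j : ZMod n) : VV n k j = ![1, ff n j, uu n j] k := rfl
lemma distMatrixZ_apply (n : ℕ) [NeZero n] (i j : ZMod n) :
    distMatrixZ n i j = ((strongPowerGraphZ n).dist i j : ℝ) := rfl

lemma uu_mul_ff_self (n : ℕ) [NeZero n] (hn : 2 ≤ n) (i : ZMod n) :
    uu n i * ff n i = 0 := by
  by_cases h : i = 0
  · simp [h, ff_zero n hn]
  · simp [uu_def, h]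

lemma D_eq (n : ℕ) [NeZero n] (hn : 2 ≤ n) (hnp : ¬ n.Prime) :
    distMatrixZ n = UU n * VV n - 1 := by
  ext i j
  rw [Matrix.sub_apply, Matrix.mul_apply, Fin.sum_univ_three]
  simp only [UU_def, VV_def, Matrix.cons_val_zero, Matrix.cons_val_one, Matrix.head_cons,
    Matrix.cons_val_two, Matrix.tail_cons]
  rw [distMatrixZ_apply, dist_eq hn hnp]
  by_cases hij : i = j
  · subst hij
    rw [if_pos rfl]
    have := uu_mul_ff_self n hn i
    have h2 : ff n i * uu n i = 0 := by rw [mul_comm]; exact this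
    simp [this, h2, Matrix.one_apply]
  · rw [if_neg hij, Matrix.one_apply_ne hij]
    by_cases hP : (i = 0 ∧ IsUnit j) ∨ (j = 0 ∧ IsUnit i)
    · rw [if_pos hP]
      rcases hP with ⟨h0, hu⟩ | ⟨h0, hu⟩
      · have hj0 : j ≠ 0 := by rintro rfl; exact hij (h0.trans rfl)
        rw [h0]
        rw [ff_zero n hn]
        simp [uu_def, ff_def, hu, hj0]
        norm_num
      · have hi0 : i ≠ 0 := by rintro rfl; exact hij h0.symm
        rw [h0]
        rw [ff_zero n hn]
        simp [uu_def, ff_def, hu, hi0]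
        norm_num
    · rw [if_neg hP]
      push_neg at hP
      have e1 : uu n i * ff n j = 0 := by
        by_cases h : i = 0
        · have := hP.1 h
          simp [uu_def, ff_def, h, this]
        · simp [uu_def, h]
      have e2 : ff n i * uu n j = 0 := by
        by_cases h : j = 0
        · have := hP.2 h
          simp [uu_def, ff_def, h, this]
        · simp [uu_def, h]
      rw [e1, e2]
      norm_num

open Polynomial in
lemma eval_main (n : ℕ) [NeZero n] (hn : 2 ≤ n) (hnp : ¬ n.Prime) (t : ℝ) (ht : t ≠ -1) :
    ((distMatrixZ n).charpoly).eval t =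
      (t + 1) ^ (n - 3) *
        (t ^ 3 + ((3 : ℝ) - n) * t ^ 2 + ((3 : ℝ) - 2 * n - 3 * n.totient) * t
          + (-(n.totient : ℝ) ^ 2 - (n.totient : ℝ) * (4 - n) - n + 1)) := by
  have hn4 : 4 ≤ n := by
    by_contra h
    push_neg at h
    interval_cases n
    · exact hnp Nat.prime_two
    · exact hnp Nat.prime_three
  set s : ℝ := t + 1 with hs_def
  have hs : s ≠ 0 := fun h => ht (by linarith [h ▸ hs_def])
  -- Step 1: eval of charpoly is a determinant
  have h1 : ((distMatrixZ n).charpoly).eval t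
      = Matrix.det (t • (1 : Matrix (ZMod n) (ZMod n) ℝ) - distMatrixZ n) := by
    rw [Matrix.charpoly, ← Polynomial.coe_evalRingHom, RingHom.map_det]
    congr 1
    ext i j
    by_cases h : i = j
    · subst h
      simp [Matrix.charmatrix_apply_eq, Matrix.one_apply_eq]
    · simp [Matrix.charmatrix_apply_ne _ _ _ h, Matrix.one_apply_ne h]
  rw [h1, D_eq n hn hnp]
  have h2 : t • (1 : Matrix (ZMod n) (ZMod n) ℝ) - (UU n * VV n - 1)
      = s • (1 : Matrix (ZMod n) (ZMod n) ℝ) - UU n * VV n := by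
    rw [hs_def, add_smul, one_smul]
    abel
  rw [h2]
  have h3 : s • (1 : Matrix (ZMod n) (ZMod n) ℝ) - UU n * VV n
      = s • ((1 : Matrix (ZMod n) (ZMod n) ℝ) - (s⁻¹ • UU n) * VV n) := by
    rw [smul_sub, Matrix.smul_mul, smul_smul, mul_inv_cancel₀ hs, one_smul]
  rw [h3, Matrix.det_smul, Matrix.det_one_sub_mul_comm, Matrix.mul_smul, VU n hn]
  rw [ZMod.card]
  have hB : (1 : Matrix (Fin 3) (Fin 3) ℝ)
        - s⁻¹ • !![(n : ℝ), 1, (n.totient : ℝ);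
                     (n.totient : ℝ), 0, (n.totient : ℝ);
                     1, 1, 0]
      = !![1 - s⁻¹ * n, -(s⁻¹), -(s⁻¹ * n.totient);
           -(s⁻¹ * n.totient), 1, -(s⁻¹ * n.totient);
           -(s⁻¹), -(s⁻¹), 1] := by
    ext i j
    fin_cases i <;> fin_cases j <;>
      simp [Matrix.one_apply] <;> ring
  rw [hB, Matrix.det_fin_three]
  have hsn : s ^ n = s ^ (n - 3) * s ^ 3 := by
    rw [← pow_add]
    congr 1
    omega
  rw [hsn]
  rw [mul_assoc]
  congr 1
  have ht1 : t = s - 1 := by rw [hs_def]; ring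
  rw [ht1]
  simp only [Matrix.of_apply, Matrix.cons_val', Matrix.cons_val_zero, Matrix.cons_val_one,
    Matrix.cons_val_two, Matrix.head_cons, Matrix.tail_cons]
  field_simp
  ring

open Polynomial in
/-- For a composite number `n`, the characteristic polynomial of the distance matrix of
the strong power graph of `ZMod n` is
`(x+1)^(n-3) * (x^3 + (3-n)x^2 + (3-2n-3φ(n))x - φ(n)^2 - φ(n)(4-n) - n + 1)`. -/
theorem distMatrixZ_charpoly (n : ℕ) [NeZero n] (hn : 2 ≤ n) (hnp : ¬ n.Prime) :
    (distMatrixZ n).charpoly =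
      (X + 1) ^ (n - 3) *
        (X ^ 3 + C ((3 : ℝ) - (n : ℝ)) * X ^ 2
          + C ((3 : ℝ) - 2 * (n : ℝ) - 3 * (n.totient : ℝ)) * X
          + C (-(n.totient : ℝ) ^ 2 - (n.totient : ℝ) * (4 - (n : ℝ)) - (n : ℝ) + 1)) := by
  apply Polynomial.eq_of_infinite_eval_eq
  have hinf : ({(-1 : ℝ)}ᶜ : Set ℝ).Infinite := (Set.finite_singleton _).infinite_compl
  apply hinf.mono
  intro t ht
  simp only [Set.mem_compl_iff, Set.mem_singleton_iff] at ht
  simp only [Set.mem_setOf_eq]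
  rw [eval_main n hn hnp t ht]
  simp [Polynomial.eval_mul, Polynomial.eval_pow, Polynomial.eval_add, Polynomial.eval_C,
    Polynomial.eval_X]
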